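/- (Dwell-time positivity of the event-triggered algorithm.) Let Assumptions 1–4' hold and let γ be either non-decreasing or C¹. Then for every compact set K ⊆ ℝ^d there exists ε > 0 with the following property. Let x : [0,T) → ℝ^d be continuous with x(0) = x0 ∈ K, and let t_0 = 0 < t_1 < t_2 < … be sampling instants such that for each n: x(t_n) ≠ 0, on [t_n, t_{n+1}) the function x satisfies x'(t) = F(x(t), 𝒰(x(t_n))), W(x(t), 𝒰(x(t_n))) ≤ -σ·γ(V(x(t))) for all t ∈ [t_n, t_{n+1}], and the triggering equality W(x(t_{n+1}), 𝒰(x(t_n))) = -σ·γ(V(x(t_{n+1}))) holds at t_{n+1}. Then t_{n+1} − t_n ≥ ε for every n; i.e., the dwell-time 𝔗(x0) := inf_n (t_{n+1} − t_n) is uniformly positive over initial conditions in any compact set. -/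

import Mathlib

open Set Filter Metric
open scoped InnerProductSpace Topology

lemma exp_aux {y : ℝ} (h0 : 0 ≤ y) (h3 : y ≤ 1/3) : Real.exp y ≤ 1 + 2*y := by
  have h1 : -y + 1 ≤ Real.exp (-y) := Real.add_one_le_exp (-y)
  have h2 : Real.exp (-y) = (Real.exp y)⁻¹ := Real.exp_neg y
  have h4 : (1 - y) * Real.exp y ≤ 1 := by
    rw [h2] at h1
    have := Real.exp_pos y
    calc (1 - y) * Real.exp y ≤ (Real.exp y)⁻¹ * Real.exp y := by nlinarith
    _ = 1 := by field_simp
  nlinarith [Real.exp_pos y]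

lemma loclip_compact {α β : Type*} [MetricSpace α] [MetricSpace β] {f : α → β}
    (hf : LocallyLipschitz f) {s : Set α} (hs : IsCompact s) :
    ∃ C : ℝ, 0 ≤ C ∧ ∀ x ∈ s, ∀ y ∈ s, dist (f x) (f y) ≤ C * dist x y := by
  rcases s.eq_empty_or_nonempty with hse | ⟨x0, hx0⟩
  · exact ⟨0, le_refl _, by simp [hse]⟩
  have H : ∀ x : α, ∃ (K : NNReal) (r : ℝ), 0 < r ∧ LipschitzOnWith K f (ball x (2*r)) := by
    intro x
    obtain ⟨K, t, ht, hl⟩ := hf x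
    obtain ⟨r', hr', hball⟩ := Metric.mem_nhds_iff.1 ht
    exact ⟨K, r'/2, by positivity, hl.mono (by
      intro y hy; apply hball; rw [mem_ball] at hy ⊢; linarith [hy])⟩
  choose Kf r hr hlip using H
  obtain ⟨I, hIs, hcover⟩ := hs.elim_nhds_subcover (fun x => ball x (r x))
    (fun x _ => ball_mem_nhds x (hr x))
  have hIne : I.Nonempty := by
    rcases mem_iUnion₂.1 (hcover hx0) with ⟨i, hi, _⟩
    exact ⟨i, hi⟩
  set δ : ℝ := I.inf' hIne r with hδdef
  have hδpos : 0 < δ := by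
    rw [hδdef, Finset.lt_inf'_iff]
    exact fun i _ => hr i
  obtain ⟨Df, hDf⟩ := Metric.isBounded_iff.1 (hs.image hf.continuous).isBounded
  have hDf0 : 0 ≤ Df := by
    have := hDf (mem_image_of_mem f hx0) (mem_image_of_mem f hx0)
    simpa using this
  set Cloc : NNReal := I.sup Kf with hClocdef
  refine ⟨max (Cloc : ℝ) (Df/δ), le_max_of_le_left Cloc.2, ?_⟩
  intro y hy z hz
  by_cases hd : dist y z < δ
  · rcases mem_iUnion₂.1 (hcover hy) with ⟨i, hiI, hyi⟩
    have hyi2 : y ∈ ball i (2 * r i) := by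
      rw [mem_ball] at hyi ⊢; linarith [hr i]
    have hzi : z ∈ ball i (2 * r i) := by
      rw [mem_ball] at hyi ⊢
      have hδr : δ ≤ r i := Finset.inf'_le r hiI
      calc dist z i ≤ dist z y + dist y i := dist_triangle _ _ _
        _ < δ + r i := by rw [dist_comm z y]; exact add_lt_add hd hyi
        _ ≤ 2 * r i := by linarith
    calc dist (f y) (f z) ≤ Kf i * dist y z := (hlip i).dist_le_mul y hyi2 z hzi
      _ ≤ (Cloc : ℝ) * dist y z := by
          apply mul_le_mul_of_nonneg_right _ dist_nonneg
          exact_mod_cast Finset.le_sup (f := Kf) hiI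
      _ ≤ max (Cloc : ℝ) (Df/δ) * dist y z :=
          mul_le_mul_of_nonneg_right (le_max_left _ _) dist_nonneg
  · push_neg at hd
    calc dist (f y) (f z) ≤ Df := hDf (mem_image_of_mem f hy) (mem_image_of_mem f hz)
      _ = (Df/δ) * δ := by field_simp
      _ ≤ (Df/δ) * dist y z := mul_le_mul_of_nonneg_left hd (by positivity)
      _ ≤ max (Cloc : ℝ) (Df/δ) * dist y z :=
          mul_le_mul_of_nonneg_right (le_max_right _ _) dist_nonneg
set_option maxHeartbeats 1000000 in
/-- Dwell-time positivity of the event-triggered algorithm, Theorem 1.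
Under Assumptions 1–4' with `γ` non-decreasing or `C¹`, for every compact set `K` there is
`ε > 0` such that any trajectory of the event-triggered algorithm starting in `K` has all
inter-sampling times `t_{n+1} - t_n ≥ ε`. -/
theorem statement4
    (d m : ℕ)
    (F : EuclideanSpace ℝ (Fin d) → EuclideanSpace ℝ (Fin m) → EuclideanSpace ℝ (Fin d))
    (U : Set (EuclideanSpace ℝ (Fin m)))
    (𝒰 : EuclideanSpace ℝ (Fin d) → EuclideanSpace ℝ (Fin m))
    (V : EuclideanSpace ℝ (Fin d) → ℝ) (γ : ℝ → ℝ) (σ : ℝ)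
    (hσ0 : 0 < σ) (hσ1 : σ < 1)
    (hγc : Continuous γ) (hγpos : ∀ v : ℝ, 0 < v → 0 < γ v)
    (hV : ContDiff ℝ 1 V) (hV0 : V 0 = 0) (hVpos : ∀ x, x ≠ 0 → 0 < V x)
    (hVrad : ∀ c : ℝ, ∃ R : ℝ, ∀ x : EuclideanSpace ℝ (Fin d), R ≤ ‖x‖ → c ≤ V x)
    (h𝒰U : ∀ x, 𝒰 x ∈ U)
    (hfeed : ∀ x, x ≠ 0 → ⟪gradient V x, F x (𝒰 x)⟫_ℝ ≤ -γ (V x))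
    -- Assumption 1
    (hF : ∀ u ∈ U, LocallyLipschitz (fun x => F x u))
    -- Assumption 2
    (κ : EuclideanSpace ℝ (Fin d) → ℝ)
    (hκlip : ∀ xs x1 x2 : EuclideanSpace ℝ (Fin d), V x1 ≤ V xs → V x2 ≤ V xs →
      ‖F x1 (𝒰 xs) - F x2 (𝒰 xs)‖ ≤ κ xs * ‖x1 - x2‖)
    (hκbdd : ∀ K : Set (EuclideanSpace ℝ (Fin d)), IsCompact K → ∃ C : ℝ, ∀ x ∈ K, κ x ≤ C)
    -- Assumption 3
    (hgradlip : LocallyLipschitz (gradient V))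
    -- Assumption 4'
    (M : EuclideanSpace ℝ (Fin d) → ℝ) (hMpos : ∀ x, 0 < M x)
    (hMbdd : ∀ K : Set (EuclideanSpace ℝ (Fin d)), IsCompact K → ∃ C : ℝ, ∀ x ∈ K, M x ≤ C)
    (hMineq : ∀ x, ‖gradient V x‖ * ‖F x (𝒰 x)‖ + ‖F x (𝒰 x)‖ ^ 2 ≤
      M x * |⟪gradient V x, F x (𝒰 x)⟫_ℝ|)
    -- `γ` non-decreasing on `[0,∞)` or `C¹`
    (hγreg : MonotoneOn γ (Ici (0 : ℝ)) ∨ ContDiff ℝ 1 γ) :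
    ∀ K : Set (EuclideanSpace ℝ (Fin d)), IsCompact K →
      ∃ ε > (0 : ℝ),
        ∀ (T : ℝ) (x : ℝ → EuclideanSpace ℝ (Fin d)) (ts : ℕ → ℝ),
          ContinuousOn x (Ico (0 : ℝ) T) → x 0 ∈ K →
          ts 0 = 0 → StrictMono ts → (∀ n : ℕ, ts (n + 1) < T) →
          (∀ n : ℕ, x (ts n) ≠ 0) →
          (∀ n : ℕ, ∀ s ∈ Ico (ts n) (ts (n + 1)),
            HasDerivWithinAt x (F (x s) (𝒰 (x (ts n)))) (Ico (ts n) (ts (n + 1))) s) →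
          (∀ n : ℕ, ∀ s ∈ Icc (ts n) (ts (n + 1)),
            ⟪gradient V (x s), F (x s) (𝒰 (x (ts n)))⟫_ℝ ≤ -σ * γ (V (x s))) →
          (∀ n : ℕ, ⟪gradient V (x (ts (n + 1))), F (x (ts (n + 1))) (𝒰 (x (ts n)))⟫_ℝ =
            -σ * γ (V (x (ts (n + 1))))) →
          ∀ n : ℕ, ε ≤ ts (n + 1) - ts n := by

  -- basic positivity facts
  have hVnn : ∀ y, 0 ≤ V y := by
    intro y
    rcases eq_or_ne y 0 with h | h
    · simp [h, hV0]
    · exact (hVpos y h).le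
  have hγnn : ∀ v : ℝ, 0 ≤ v → 0 ≤ γ v := by
    intro v hv
    rcases eq_or_lt_of_le hv with h | h
    · have htd : Tendsto γ (𝓝[>] (0:ℝ)) (𝓝 (γ 0)) :=
        (hγc.tendsto 0).mono_left nhdsWithin_le_nhds
      have h0 : 0 ≤ γ 0 := ge_of_tendsto htd
        (eventually_nhdsWithin_of_forall (fun t ht => (hγpos t ht).le))
      rw [← h]; exact h0
    · exact (hγpos v h).le
  have hVd : Differentiable ℝ V := hV.differentiable one_ne_zero
  intro K hK
  -- bound of V on K
  obtain ⟨c0, hc0⟩ := (hK.image hV.continuous).bddAbove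
  set c : ℝ := max c0 0 with hcdef
  have hcK : ∀ y ∈ K, V y ≤ c := fun y hy =>
    le_max_of_le_left (hc0 (mem_image_of_mem V hy))
  have hcnn : (0:ℝ) ≤ c := le_max_right _ _
  -- the compact sublevel set
  set S : Set (EuclideanSpace ℝ (Fin d)) := {y | V y ≤ c} with hSdef
  have hScl : IsClosed S := isClosed_le hV.continuous continuous_const
  obtain ⟨R, hR⟩ := hVrad (c+1)
  have hSsub : S ⊆ Metric.closedBall 0 R := by
    intro y hy
    rw [Metric.mem_closedBall, dist_zero_right]
    by_contra hcon
    push_neg at hcon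
    have h1 := hR y hcon.le
    have h2 : V y ≤ c := hy
    linarith
  have hScomp : IsCompact S :=
    (isCompact_closedBall 0 R).of_isClosed_subset hScl hSsub
  -- the constants
  obtain ⟨Cκ0, hCκ0⟩ := hκbdd S hScomp
  set Kk : ℝ := max Cκ0 1 with hKkdef
  have hKk1 : (1:ℝ) ≤ Kk := le_max_right _ _
  have hKkpos : (0:ℝ) < Kk := lt_of_lt_of_le one_pos hKk1
  obtain ⟨CM0, hCM0⟩ := hMbdd S hScomp
  set CM : ℝ := max CM0 1 with hCMdef
  have hCM1 : (1:ℝ) ≤ CM := le_max_right _ _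
  obtain ⟨L0, hL0nn, hL0⟩ := loclip_compact hgradlip hScomp
  set L : ℝ := max L0 1 with hLdef
  have hL1 : (1:ℝ) ≤ L := le_max_right _ _
  -- one-sided Lipschitz-type bound for γ
  obtain ⟨Lγ, hLγnn, hγkey⟩ :
      ∃ Lγ : ℝ, 0 ≤ Lγ ∧ ∀ a b : ℝ, 0 ≤ a → a ≤ b → b ≤ c → γ a ≤ γ b + Lγ * (b - a) := by
    rcases hγreg with hmono | hC1
    · refine ⟨0, le_refl _, fun a b ha hab hbc => ?_⟩
      have := hmono (mem_Ici.2 ha) (mem_Ici.2 (ha.trans hab)) hab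
      linarith
    · obtain ⟨Lγ, hLγnn, hLγ⟩ :=
        loclip_compact hC1.locallyLipschitz (isCompact_Icc (a := (0:ℝ)) (b := c))
      refine ⟨Lγ, hLγnn, fun a b ha hab hbc => ?_⟩
      have h1 := hLγ a ⟨ha, hab.trans hbc⟩ b ⟨ha.trans hab, hbc⟩
      rw [Real.dist_eq, Real.dist_eq] at h1
      have h2 : |a - b| = b - a := by
        rw [abs_sub_comm]; exact abs_of_nonneg (by linarith)
      rw [h2] at h1
      have h3 : γ a - γ b ≤ |γ a - γ b| := le_abs_self _
      linarith
  set Cs : ℝ := (4*L + 2*Kk)*CM + 4*σ*Lγ*CM with hCsdef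
  have hLpos : (0:ℝ) < L := lt_of_lt_of_le one_pos hL1
  have hCMpos : (0:ℝ) < CM := lt_of_lt_of_le one_pos hCM1
  have hCspos : 0 < Cs := by
    rw [hCsdef]
    have h1 : (0:ℝ) ≤ 4*σ*Lγ*CM :=
      mul_nonneg (mul_nonneg (mul_nonneg (by norm_num) hσ0.le) hLγnn) hCMpos.le
    nlinarith
  refine ⟨min (min (1/(3*Kk)) (1/(2*L*CM))) ((1-σ)/(2*Cs)), ?_, ?_⟩
  · have h1 : (0:ℝ) < 1/(3*Kk) := by positivity
    have h2 : (0:ℝ) < 1/(2*L*CM) := by positivity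
    have h3 : (0:ℝ) < (1-σ)/(2*Cs) := by
      have : (0:ℝ) < 1 - σ := by linarith
      positivity
    exact lt_min (lt_min h1 h2) h3
  intro T x ts hxc hx0K hts0 htsm htsT hne hode hWle htrig n
  set ε : ℝ := min (min (1/(3*Kk)) (1/(2*L*CM))) ((1-σ)/(2*Cs)) with hεdef
  have hε1 : ε ≤ 1/(3*Kk) := le_trans (min_le_left _ _) (min_le_left _ _)
  have hε2 : ε ≤ 1/(2*L*CM) := le_trans (min_le_left _ _) (min_le_right _ _)
  have hε3 : ε ≤ (1-σ)/(2*Cs) := min_le_right _ _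
  by_contra hcon
  push_neg at hcon
  -- chain rule for V along the trajectory
  have hchain : ∀ (k : ℕ), ∀ t ∈ Ico (ts k) (ts (k+1)),
      HasDerivWithinAt (fun s => V (x s))
        (⟪gradient V (x t), F (x t) (𝒰 (x (ts k)))⟫_ℝ) (Ico (ts k) (ts (k+1))) t := by
    intro k t ht
    have h1 : HasFDerivAt V (InnerProductSpace.toDual ℝ _ (gradient V (x t))) (x t) :=
      hasGradientAt_iff_hasFDerivAt.1 (hVd (x t)).hasGradientAt
    have h2 := h1.comp_hasDerivWithinAt t (hode k t ht)
    rw [InnerProductSpace.toDual_apply_apply] at h2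
    exact h2
  have htsnn : ∀ k : ℕ, 0 ≤ ts k := by
    intro k
    rw [← hts0]
    exact htsm.monotone (Nat.zero_le k)
  have htlt : ∀ k : ℕ, ts k < ts (k+1) := fun k => htsm (Nat.lt_succ_self k)
  have hIccsub : ∀ k : ℕ, Icc (ts k) (ts (k+1)) ⊆ Ico 0 T := fun k t ht =>
    ⟨le_trans (htsnn k) ht.1, lt_of_le_of_lt ht.2 (htsT k)⟩
  have hxcont : ∀ k : ℕ, ContinuousOn x (Icc (ts k) (ts (k+1))) :=
    fun k => hxc.mono (hIccsub k)
  have hderivAt : ∀ (k : ℕ), ∀ t ∈ Ioo (ts k) (ts (k+1)),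
      HasDerivAt (fun s => V (x s))
        (⟪gradient V (x t), F (x t) (𝒰 (x (ts k)))⟫_ℝ) t := by
    intro k t ht
    exact (hchain k t (Ioo_subset_Ico_self ht)).hasDerivAt
      (Ico_mem_nhds ht.1 ht.2)
  -- V is non-increasing along each sampling interval
  have hanti : ∀ k : ℕ, AntitoneOn (fun t => V (x t)) (Icc (ts k) (ts (k+1))) := by
    intro k
    apply antitoneOn_of_deriv_nonpos (convex_Icc _ _)
      (show ContinuousOn (fun t => V (x t)) _ from
        hV.continuous.comp_continuousOn (hxcont k))
    · rw [interior_Icc]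
      intro t ht
      exact (hderivAt k t ht).differentiableAt.differentiableWithinAt
    · rw [interior_Icc]
      intro t ht
      rw [(hderivAt k t ht).deriv]
      have h1 := hWle k t ⟨ht.1.le, ht.2.le⟩
      have h2 : 0 ≤ γ (V (x t)) := hγnn _ (hVnn _)
      nlinarith
  have hVts : ∀ k : ℕ, V (x (ts k)) ≤ c := by
    intro k
    induction k with
    | zero => rw [hts0]; exact hcK _ hx0K
    | succ k ih =>
      refine le_trans ?_ ih
      exact hanti k ⟨le_refl _, (htlt k).le⟩ ⟨(htlt k).le, le_refl _⟩ (htlt k).le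
  -- notation for the n-th interval
  set a : ℝ := ts n with hadef
  set b : ℝ := ts (n+1) with hbdef
  set τ : ℝ := b - a with hτdef
  set p : EuclideanSpace ℝ (Fin d) := x (ts n) with hpdef
  set u : EuclideanSpace ℝ (Fin m) := 𝒰 p with hudef
  set q : EuclideanSpace ℝ (Fin d) := x (ts (n+1)) with hqdef
  set A : ℝ := ‖F p u‖ with hAdef
  set G : ℝ := ‖gradient V p‖ with hGdef
  set w : ℝ := -(⟪gradient V p, F p u⟫_ℝ) with hwdef
  have hab : a < b := htlt n
  have hτpos : 0 < τ := by simp only [hτdef]; linarith only [hab]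
  have hτε : τ < ε := hcon
  have hε3' : ε * (2*Cs) ≤ 1 - σ :=
    (le_div_iff₀ (by linarith only [hCspos] : (0:ℝ) < 2*Cs)).1 hε3
  clear_value τ ε Cs w
  have hεKk : Kk * ε ≤ 1/3 := by
    have h := mul_le_mul_of_nonneg_left hε1 hKkpos.le
    have h2 : Kk * (1/(3*Kk)) = 1/3 := by field_simp
    linarith
  have hεL : 2*L*CM*ε ≤ 1 := by
    have h := mul_le_mul_of_nonneg_left hε2 (by positivity : (0:ℝ) ≤ 2*L*CM)
    have h2 : 2*L*CM * (1/(2*L*CM)) = 1 := by field_simp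
    linarith
  -- facts on the n-th interval
  have hVle : ∀ t ∈ Icc a b, V (x t) ≤ V p :=
    fun t ht => hanti n ⟨le_refl _, hab.le⟩ ht ht.1
  have hpS : p ∈ S := by simp only [hSdef, mem_setOf_eq]; exact hVts n
  have hVc : ∀ t ∈ Icc a b, V (x t) ≤ c := fun t ht => le_trans (hVle t ht) (hVts n)
  have hxS : ∀ t ∈ Icc a b, x t ∈ S := by
    intro t ht; simp only [hSdef, mem_setOf_eq]; exact hVc t ht
  have hW0' : ⟪gradient V p, F p u⟫_ℝ = -w := by rw [hwdef]; ring
  have hwγ : γ (V p) ≤ w := by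
    have h1 := hfeed p (hne n)
    rw [hW0'] at h1; linarith only [h1]
  have hwpos : 0 < w := lt_of_lt_of_le (hγpos _ (hVpos p (hne n))) hwγ
  have hAnn : 0 ≤ A := norm_nonneg _
  have hGnn : 0 ≤ G := norm_nonneg _
  have hGA : w ≤ G * A := by
    have h1 : |⟪gradient V p, F p u⟫_ℝ| ≤ G * A := abs_real_inner_le_norm _ _
    rw [hW0', abs_neg, abs_of_pos hwpos] at h1
    exact h1
  have hMw : G*A + A^2 ≤ CM * w := by
    have h1 := hMineq p
    rw [hW0', abs_neg, abs_of_pos hwpos] at h1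
    have h3 : M p ≤ CM := le_trans (hCM0 p hpS) (le_max_left _ _)
    have h4 := mul_le_mul_of_nonneg_right h3 hwpos.le
    linarith only [h1, h4]
  have hACMG : A ≤ CM * G := by
    rcases eq_or_lt_of_le hAnn with h | h
    · rw [← h]; positivity
    · nlinarith only [hMw, mul_le_mul_of_nonneg_left hGA hCMpos.le, hGnn, h]
  -- Lipschitz bounds for F and the gradient on the interval
  have hκp : κ p ≤ Kk := le_trans (hCκ0 p hpS) (le_max_left _ _)
  have hFlip : ∀ t ∈ Icc a b, ‖F (x t) u - F p u‖ ≤ Kk * ‖x t - p‖ := by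
    intro t ht
    have h1 := hκlip p (x t) p (hVle t ht) (le_refl _)
    exact le_trans h1 (mul_le_mul_of_nonneg_right hκp (norm_nonneg _))
  have hFnorm : ∀ t ∈ Icc a b, ‖F (x t) u‖ ≤ Kk * ‖x t - p‖ + A := by
    intro t ht
    have h1 := norm_sub_norm_le (F (x t) u) (F p u)
    have h2 := hFlip t ht
    linarith only [h1, h2]
  have hcontab : ContinuousOn x (Icc a b) := hxcont n
  -- Gronwall estimate
  have hgron : ∀ t ∈ Icc a b, ‖x t - p‖ ≤ 2*A*(t - a) := by
    have hder : ∀ t ∈ Ico a b, HasDerivWithinAt (fun s => x s - p) (F (x t) u) (Ici t) t := by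
      intro t ht
      have h1 := (hode n t ht).sub_const p
      apply h1.mono_of_mem_nhdsWithin
      rw [mem_nhdsWithin]
      exact ⟨Iio b, isOpen_Iio, ht.2, fun y hy => ⟨le_trans ht.1 hy.2, hy.1⟩⟩
    have hbnd : ∀ t ∈ Ico a b, ‖F (x t) u‖ ≤ Kk * ‖x t - p‖ + A :=
      fun t ht => hFnorm t (Ico_subset_Icc_self ht)
    have key := norm_le_gronwallBound_of_norm_deriv_right_le (δ := 0)
      (hcontab.sub continuousOn_const) hder (by simp [hadef]) hbnd
    intro t ht
    have h1 : ‖x t - p‖ ≤ gronwallBound 0 Kk A (t - a) := key t ht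
    have hKkne : Kk ≠ 0 := ne_of_gt hKkpos
    rw [gronwallBound_of_K_ne_0 hKkne] at h1
    simp only [zero_mul, zero_add] at h1
    have hta : (0:ℝ) ≤ t - a := by linarith only [ht.1]
    have htτ : t - a ≤ τ := by rw [hτdef]; linarith only [ht.2]
    have hyb : Kk * (t - a) ≤ 1/3 := by
      have m1 := mul_le_mul_of_nonneg_left htτ hKkpos.le
      have m2 := mul_le_mul_of_nonneg_left hτε.le hKkpos.le
      linarith only [m1, m2, hεKk]
    have hexp := exp_aux (y := Kk*(t-a)) (mul_nonneg hKkpos.le hta) hyb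
    have h2 : A/Kk * (Real.exp (Kk*(t-a)) - 1) ≤ A/Kk * (2*(Kk*(t-a))) := by
      apply mul_le_mul_of_nonneg_left _ (div_nonneg hAnn hKkpos.le)
      linarith only [hexp]
    have h3 : A/Kk * (2*(Kk*(t-a))) = 2*A*(t-a) := by field_simp
    linarith only [h1, h2, h3]
  have hKkτ : Kk * τ ≤ 1/3 := by
    have m2 := mul_le_mul_of_nonneg_left hτε.le hKkpos.le
    exact le_trans m2 hεKk
  have hD2 : ∀ t ∈ Icc a b, ‖x t - p‖ ≤ 2*A*τ := by
    intro t ht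
    have h1 := hgron t ht
    have h2 : t - a ≤ τ := by rw [hτdef]; linarith only [ht.2]
    have m1 := mul_le_mul_of_nonneg_left h2 hAnn
    linarith only [h1, m1]
  have hF2 : ∀ t ∈ Icc a b, ‖F (x t) u‖ ≤ 2*A := by
    intro t ht
    have h1 := hFnorm t ht
    have h2 := hD2 t ht
    have m1 := mul_le_mul_of_nonneg_left h2 hKkpos.le
    have m2 := mul_le_mul_of_nonneg_left hKkτ (by linarith only [hAnn] : (0:ℝ) ≤ 2*A)
    nlinarith only [h1, m1, m2, hAnn]
  have hgradb : ∀ t ∈ Icc a b, ‖gradient V (x t) - gradient V p‖ ≤ L * ‖x t - p‖ := by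
    intro t ht
    have h1 := hL0 (x t) (hxS t ht) p hpS
    rw [dist_eq_norm, dist_eq_norm] at h1
    exact le_trans h1 (mul_le_mul_of_nonneg_right (le_max_left _ _) (norm_nonneg _))
  have hG2 : ∀ t ∈ Icc a b, ‖gradient V (x t)‖ ≤ 2*G := by
    intro t ht
    have h1 := hgradb t ht
    have h2 := hD2 t ht
    have h3 := norm_sub_norm_le (gradient V (x t)) (gradient V p)
    have h4 : L * ‖x t - p‖ ≤ L * (2*A*τ) :=
      mul_le_mul_of_nonneg_left h2 hLpos.le
    have h5 : L*(2*A*τ) ≤ L*(2*(CM*G)*ε) := by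
      have c1 : A*τ ≤ (CM*G)*ε :=
        mul_le_mul hACMG hτε.le hτpos.le (mul_nonneg hCMpos.le hGnn)
      have c2 := mul_le_mul_of_nonneg_left c1 hLpos.le
      nlinarith only [c2]
    have h6 : L*(2*(CM*G)*ε) ≤ G := by
      have c3 := mul_le_mul_of_nonneg_right hεL hGnn
      nlinarith only [c3]
    linarith only [h1, h3, h4, h5, h6]
  -- bound on the decrease of V over the interval
  have hbIcc : b ∈ Icc a b := ⟨hab.le, le_refl _⟩
  have hdaux : ∀ t ∈ Ioo a b,
      HasDerivAt (fun s => V (x s) + (4*CM*w)*s)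
        (⟪gradient V (x t), F (x t) u⟫_ℝ + 4*CM*w) t := by
    intro t ht
    have h1 := hderivAt n t ht
    have h2 : HasDerivAt (fun s : ℝ => (4*CM*w)*s) (4*CM*w) t := by
      simpa using (hasDerivAt_id t).const_mul (4*CM*w)
    exact h1.add h2
  have hinlow : ∀ t ∈ Icc a b, -(4*CM*w) ≤ ⟪gradient V (x t), F (x t) u⟫_ℝ := by
    intro t ht
    have habs : |⟪gradient V (x t), F (x t) u⟫_ℝ|
        ≤ ‖gradient V (x t)‖ * ‖F (x t) u‖ := abs_real_inner_le_norm _ _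
    have h1 := hG2 t ht
    have h2 := hF2 t ht
    have h3 := neg_abs_le (⟪gradient V (x t), F (x t) u⟫_ℝ)
    have h4 : ‖gradient V (x t)‖ * ‖F (x t) u‖ ≤ (2*G) * (2*A) :=
      mul_le_mul h1 h2 (norm_nonneg _) (by linarith)
    have h5 : G * A ≤ CM * w := by linarith only [hMw, sq_nonneg A]
    have h6 := mul_le_mul_of_nonneg_left h5 (by norm_num : (0:ℝ) ≤ 4)
    nlinarith only [habs, h3, h4, h6]
  have hΔV : V p - V q ≤ 4*CM*w*τ := by
    have hmono2 : MonotoneOn (fun t => V (x t) + (4*CM*w)*t) (Icc a b) := by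
      apply monotoneOn_of_deriv_nonneg (convex_Icc _ _)
      · exact (hV.continuous.comp_continuousOn hcontab).add
          ((continuous_const.mul continuous_id).continuousOn)
      · rw [interior_Icc]
        intro t ht
        exact (hdaux t ht).differentiableAt.differentiableWithinAt
      · rw [interior_Icc]
        intro t ht
        rw [(hdaux t ht).deriv]
        have := hinlow t (Ioo_subset_Icc_self ht)
        linarith only [this]
    have h1 := hmono2 ⟨le_refl _, hab.le⟩ hbIcc hab.le
    simp only at h1
    rw [hτdef]
    linarith only [h1]
  -- the rise of W over the interval
  have hsplit : ⟪gradient V q, F q u⟫_ℝ - ⟪gradient V p, F p u⟫_ℝ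
      = ⟪gradient V q - gradient V p, F q u⟫_ℝ + ⟪gradient V p, F q u - F p u⟫_ℝ := by
    rw [inner_sub_left, inner_sub_right]; ring
  have hT1 : |⟪gradient V q - gradient V p, F q u⟫_ℝ| ≤ (L*(2*A*τ)) * (2*A) := by
    refine le_trans (abs_real_inner_le_norm _ _) ?_
    have h1 : ‖gradient V q - gradient V p‖ ≤ L*(2*A*τ) :=
      le_trans (hgradb b hbIcc) (mul_le_mul_of_nonneg_left (hD2 b hbIcc) hLpos.le)
    have h2 : ‖F q u‖ ≤ 2*A := hF2 b hbIcc
    exact mul_le_mul h1 h2 (norm_nonneg _)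
      (mul_nonneg hLpos.le (mul_nonneg (mul_nonneg (by norm_num) hAnn) hτpos.le))
  have hT2 : |⟪gradient V p, F q u - F p u⟫_ℝ| ≤ G * (Kk*(2*A*τ)) := by
    refine le_trans (abs_real_inner_le_norm _ _) ?_
    have h1 : ‖F q u - F p u‖ ≤ Kk * (2*A*τ) :=
      le_trans (hFlip b hbIcc) (mul_le_mul_of_nonneg_left (hD2 b hbIcc) hKkpos.le)
    exact mul_le_mul_of_nonneg_left h1 hGnn
  have hWqval : -σ * γ (V q) ≤ -w + (L*(2*A*τ))*(2*A) + G*(Kk*(2*A*τ)) := by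
    have h1 := le_abs_self (⟪gradient V q - gradient V p, F q u⟫_ℝ)
    have h2 := le_abs_self (⟪gradient V p, F q u - F p u⟫_ℝ)
    have h3 := htrig n
    have h4 : ⟪gradient V q, F q u⟫_ℝ - ⟪gradient V p, F p u⟫_ℝ
        ≤ (L*(2*A*τ))*(2*A) + G*(Kk*(2*A*τ)) := by
      rw [hsplit]; linarith only [h1, h2, hT1, hT2]
    rw [hW0'] at h4
    rw [← h3]
    linarith only [h4]
  -- bound on γ (V q)
  have hγq : γ (V q) ≤ w + Lγ*(4*CM*w*τ) := by
    have h1 := hγkey (V q) (V p) (hVnn q) (hVle b hbIcc) (hVts n)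
    have h2 : Lγ * (V p - V q) ≤ Lγ * (4*CM*w*τ) := mul_le_mul_of_nonneg_left hΔV hLγnn
    linarith only [h1, h2, hwγ]
  -- final contradiction
  have hm := mul_le_mul_of_nonneg_left hγq hσ0.le
  have hm' : σ * γ (V q) ≤ σ*w + σ*(Lγ*(4*CM*w*τ)) := by
    rw [mul_add] at hm; exact hm
  have hstep1 : (1-σ)*w - σ*(Lγ*(4*CM*w*τ)) ≤ (L*(2*A*τ))*(2*A) + G*(Kk*(2*A*τ)) := by
    linarith only [hWqval, hm']
  have e1 : A^2 ≤ CM*w := by linarith only [hMw, mul_nonneg hGnn hAnn]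
  have e2 : G*A ≤ CM*w := by linarith only [hMw, sq_nonneg A]
  have e3 := mul_le_mul_of_nonneg_left e1 (by linarith only [hL1] : (0:ℝ) ≤ 4*L)
  have e4 := mul_le_mul_of_nonneg_left e2 (by linarith only [hKk1] : (0:ℝ) ≤ 2*Kk)
  have hsum : 4*L*(A^2) + 2*Kk*(G*A) ≤ (4*L+2*Kk)*(CM*w) := by nlinarith only [e3, e4]
  have hstep2 : (L*(2*A*τ))*(2*A) + G*(Kk*(2*A*τ)) ≤ (4*L+2*Kk)*CM*w*τ := by
    have := mul_le_mul_of_nonneg_right hsum hτpos.le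
    nlinarith only [this]
  have hfinal : (1-σ)*w ≤ Cs*w*τ := by
    rw [hCsdef]
    nlinarith only [hstep1, hstep2]
  have hCw : 0 < Cs*w := mul_pos hCspos hwpos
  have c1 := mul_le_mul_of_nonneg_left hτε.le hCw.le
  have c2 := mul_le_mul_of_nonneg_right hε3' hwpos.le
  have hposw : 0 < (1-σ)*w := mul_pos (by linarith only [hσ1]) hwpos
  nlinarith only [hfinal, c1, c2, hposw]
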